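/- Let Ω > 0, let m₁, …, m_N be integers, let A₀, F₀ ∈ ℂ^{N×N} be diagonal matrices with A₀ − F₀ = iΩ·diag(m₁, …, m_N), let F₁ ∈ ℂ^{N×N}, and let (A₁^{(n)})_{n∈ℤ} and (P₁^{(n)})_{n∈ℤ} be families of matrices in ℂ^{N×N}. Let 1 ≤ r ≤ N and f₀ ∈ ℂ, and suppose (F₀)_{ll} = f₀ for all l ∈ {1, …, r} (a degenerate point of multiplicity r). Assume that for every l ∈ {1, …, r} the Fourier-coefficient equation holds at n = m_l: iΩ·m_l·P₁^{(m_l)} − A₀·P₁^{(m_l)} + P₁^{(m_l)}·F₀ = Σ_{k=1}^{N} A₁^{(m_l − m_k)}·E_{kk} − Σ_{k=1}^{N} [m_l = m_k]·E_{kk}·F₁. Then the entries of the upper-left r×r block of F₁ are given by (F₁)_{lk} = (A₁^{(m_l − m_k)})_{lk} for all l, k ∈ {1, …, r}. -/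

import Mathlib

open Matrix

/-- **The degenerate block of the first-order Floquet correction.** At a degenerate point
`f₀` of multiplicity `r` (occupying the first `r` diagonal entries of `F₀`), the
Fourier coefficient equations at `n = m_l`, `l = 1, …, r`, determine the upper-left
`r × r` block of `F₁`: `(F₁)_{lk} = (A₁^{(m_l − m_k)})_{lk}` for `l, k ∈ {1, …, r}`. -/
theorem first_order_floquet_degenerate_block {N : ℕ}
    (Ω : ℝ) (hΩ : 0 < Ω)
    (m : Fin N → ℤ)
    (A₀ F₀ : Matrix (Fin N) (Fin N) ℂ)
    (hA₀ : A₀.IsDiag) (hF₀ : F₀.IsDiag)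
    (hfold : A₀ - F₀ = (Complex.I * (Ω : ℂ)) • Matrix.diagonal (fun k => (m k : ℂ)))
    (F₁ : Matrix (Fin N) (Fin N) ℂ)
    (A₁ P₁ : ℤ → Matrix (Fin N) (Fin N) ℂ)
    (r : ℕ) (hr1 : 1 ≤ r) (hrN : r ≤ N) (f₀ : ℂ)
    (hdeg : ∀ l : Fin N, (l : ℕ) < r → F₀ l l = f₀)
    (heq : ∀ l : Fin N, (l : ℕ) < r →
      (Complex.I * (Ω : ℂ) * (m l : ℂ)) • P₁ (m l) - A₀ * P₁ (m l) + P₁ (m l) * F₀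
        = (∑ k : Fin N, A₁ (m l - m k) * Matrix.single k k 1)
          - ∑ k : Fin N, (if m l = m k then (1 : ℂ) else 0) •
              (Matrix.single k k 1 * F₁)) :
    ∀ l k : Fin N, (l : ℕ) < r → (k : ℕ) < r → F₁ l k = A₁ (m l - m k) l k := by
  intro l k hl hk
  have hmain := congrArg (fun M => M l k) (heq l hl)
  simp only [Matrix.sub_apply, Matrix.add_apply, Matrix.smul_apply, smul_eq_mul,
    Matrix.sum_apply] at hmain
  -- entry of A₀ * P₁
  have h1 : (A₀ * P₁ (m l)) l k = A₀ l l * P₁ (m l) l k := by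
    rw [Matrix.mul_apply]
    exact Finset.sum_eq_single l (fun j _ hj => by rw [hA₀ (Ne.symm hj), zero_mul])
      (fun h => absurd (Finset.mem_univ l) h)
  -- entry of P₁ * F₀
  have h2 : (P₁ (m l) * F₀) l k = P₁ (m l) l k * F₀ k k := by
    rw [Matrix.mul_apply]
    exact Finset.sum_eq_single k (fun j _ hj => by rw [hF₀ hj, mul_zero])
      (fun h => absurd (Finset.mem_univ k) h)
  -- first sum entry
  have h3 : ∀ j : Fin N, ((A₁ (m l - m j) * Matrix.single j j 1 :
      Matrix (Fin N) (Fin N) ℂ)) l k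
      = if j = k then A₁ (m l - m k) l k else 0 := by
    intro j
    by_cases hjk : j = k
    · subst hjk; simp
    · simp [Matrix.mul_single_apply_of_ne (c := (1:ℂ)) j j l k (Ne.symm hjk), hjk]
  have h4 : ∀ j : Fin N, (if m l = m j then (1 : ℂ) else 0) *
      ((Matrix.single j j 1 * F₁ : Matrix (Fin N) (Fin N) ℂ)) l k
      = if j = l then (if m l = m j then (1 : ℂ) else 0) * F₁ l k else 0 := by
    intro j
    by_cases hjl : j = l
    · subst hjl; simp
    · simp [Matrix.single_mul_apply_of_ne (c := (1:ℂ)) j j l k (Ne.symm hjl), hjl]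
  rw [h1, h2] at hmain
  simp only [h3, h4, Finset.sum_ite_eq', Finset.mem_univ, if_true] at hmain
  have hfd := congrArg (fun M => M l l) hfold
  simp only [Matrix.sub_apply, Matrix.smul_apply, Matrix.diagonal_apply_eq,
    smul_eq_mul] at hfd
  rw [hdeg l hl] at hfd
  rw [hdeg k hk] at hmain
  linear_combination hmain + P₁ (m l) l k * hfd
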